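/- Let A be a Banach algebra such that A* has the right-weak*-weak convergence property with respect to A and A** has the left-weak*-weak convergence property with respect to A. If the second dual A** (with the first Arens product) is weakly amenable, then A is weakly amenable. -/

import Mathlib

open ContinuousLinearMap NormedSpace Filter Topology Metric

noncomputable section

namespace NormedSpace

/-- The topological dual of a seminormed space `E` (as in the older Mathlib). -/
def Dual (𝕜 : Type*) [NontriviallyNormedField 𝕜] (E : Type*) [SeminormedAddCommGroup E]
    [NormedSpace 𝕜 E] : Type _ :=
  E →L[𝕜] 𝕜

variable {𝕜 : Type*} [NontriviallyNormedField 𝕜] {E : Type*} [NormedAddCommGroup E] [NormedSpace 𝕜 E]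

instance : NormedAddCommGroup (Dual 𝕜 E) := ContinuousLinearMap.toNormedAddCommGroup

instance : NormedSpace 𝕜 (Dual 𝕜 E) := ContinuousLinearMap.toNormedSpace

instance : FunLike (Dual 𝕜 E) E 𝕜 := ContinuousLinearMap.funLike

instance : ContinuousLinearMapClass (Dual 𝕜 E) 𝕜 E 𝕜 := ContinuousLinearMap.continuousSemilinearMapClass

end NormedSpace

namespace Arens

section Bilinear

variable {X Y Z : Type*} [NormedAddCommGroup X] [NormedSpace ℂ X]
  [NormedAddCommGroup Y] [NormedSpace ℂ Y] [NormedAddCommGroup Z] [NormedSpace ℂ Z]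

/-- The Arens adjoint `m*` of a bounded bilinear map `m : X × Y → Z`,
`⟨m*(z',x), y⟩ = ⟨z', m(x,y)⟩`. -/
def adj (f : X →L[ℂ] Y →L[ℂ] Z) : Dual ℂ Z →L[ℂ] X →L[ℂ] Dual ℂ Y :=
  ((ContinuousLinearMap.compL ℂ X (Y →L[ℂ] Z) (Y →L[ℂ] ℂ)).flip f).comp
    (ContinuousLinearMap.compL ℂ Y Z ℂ)

@[simp] lemma adj_apply (f : X →L[ℂ] Y →L[ℂ] Z) (z' : Dual ℂ Z) (x : X) (y : Y) :
    adj f z' x y = z' (f x y) := rfl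

/-- The Arens triple-adjoint extension `m*** : X** × Y** → Z**` of a bounded
bilinear map `m : X × Y → Z`. -/
def ext3 (f : X →L[ℂ] Y →L[ℂ] Z) :
    Dual ℂ (Dual ℂ X) →L[ℂ] Dual ℂ (Dual ℂ Y) →L[ℂ] Dual ℂ (Dual ℂ Z) :=
  adj (adj (adj f))

/-- Weak-star convergence of a net `(a i)` of `X` (canonically embedded in `X**`)
to an element `F` of the bidual `X**`. -/
def WStarTendsto {ι : Type*} (a : ι → X) (l : Filter ι) (F : Dual ℂ (Dual ℂ X)) : Prop :=
  ∀ x' : Dual ℂ X, Tendsto (fun i => x' (a i)) l (𝓝 (F x'))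

end Bilinear

section Algebra

variable (A : Type*) [NonUnitalNormedRing A] [NormedSpace ℂ A]
  [IsScalarTower ℂ A A] [SMulCommClass ℂ A A]

/-- The multiplication of a (non-unital) Banach algebra as a bounded bilinear map. -/
abbrev mulCLM : A →L[ℂ] A →L[ℂ] A := ContinuousLinearMap.mul ℂ A

/-- The first Arens product on the bidual `A**`. -/
def fstArens (F G : Dual ℂ (Dual ℂ A)) : Dual ℂ (Dual ℂ A) := ext3 (mulCLM A) F G

/-- The second Arens product on the bidual `A**` (`m^{t***t}`). -/
def sndArens (F G : Dual ℂ (Dual ℂ A)) : Dual ℂ (Dual ℂ A) :=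
  ext3 ((mulCLM A).flip) G F

/-- A Banach algebra is Arens regular when its two Arens products coincide. -/
def ArensRegular : Prop := ∀ F G : Dual ℂ (Dual ℂ A), fstArens A F G = sndArens A F G

end Algebra

section ModuleWC

universe u
variable {A : Type u} {B : Type*} [NonUnitalNormedRing A] [NormedSpace ℂ A]
  [NormedAddCommGroup B] [NormedSpace ℂ B]

/-- For a left Banach `A`-module action `πl` on `B`, the element `b' a ∈ B*`,
`⟨b' a, b⟩ = ⟨b', a • b⟩`. -/
def dualSmulL (πl : A →L[ℂ] B →L[ℂ] B) (b' : Dual ℂ B) (a : A) : Dual ℂ B := adj πl b' a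

/-- The Arens extension `b' a'' ∈ B***`, `⟨b'', b' a''⟩ = ⟨π_ℓ***(a'', b''), b'⟩`. -/
def dualSmulLStar (πl : A →L[ℂ] B →L[ℂ] B) (b' : Dual ℂ B) (F : Dual ℂ (Dual ℂ A)) :
    Dual ℂ (Dual ℂ (Dual ℂ B)) :=
  (inclusionInDoubleDual ℂ (Dual ℂ B) b').comp (ext3 πl F)

/-- `b' ∈ B*` has the left-weak*-weak convergence property (`Lw*wc`) with respect to `A`:
for every net `(a_α) ⊆ A` with `a_α → a''` weak* in `A**`, the net `b' a_α` converges
weakly to `b' a''` in `B*`. -/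
def LWStarWC (πl : A →L[ℂ] B →L[ℂ] B) (b' : Dual ℂ B) : Prop :=
  ∀ (ι : Type u) (l : Filter ι) (a : ι → A) (F : Dual ℂ (Dual ℂ A)),
    WStarTendsto a l F →
    ∀ b'' : Dual ℂ (Dual ℂ B),
      Tendsto (fun i => b'' (dualSmulL πl b' (a i))) l (𝓝 (dualSmulLStar πl b' F b''))

/-- For a right Banach `A`-module action `πr` on `B`, the element `a b' ∈ B*`,
`⟨a b', b⟩ = ⟨b', b • a⟩`. -/
def dualSmulR (πr : B →L[ℂ] A →L[ℂ] B) (a : A) (b' : Dual ℂ B) : Dual ℂ B :=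
  adj πr.flip b' a

/-- The Arens extension `a'' b' ∈ B***`, `⟨b'', a'' b'⟩ = ⟨π_r^{t***}(a'', b''), b'⟩`. -/
def dualSmulRStar (πr : B →L[ℂ] A →L[ℂ] B) (F : Dual ℂ (Dual ℂ A)) (b' : Dual ℂ B) :
    Dual ℂ (Dual ℂ (Dual ℂ B)) :=
  (inclusionInDoubleDual ℂ (Dual ℂ B) b').comp (ext3 πr.flip F)

/-- `b' ∈ B*` has the right-weak*-weak convergence property (`Rw*wc`) with respect to `A`. -/
def RWStarWC (πr : B →L[ℂ] A →L[ℂ] B) (b' : Dual ℂ B) : Prop :=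
  ∀ (ι : Type u) (l : Filter ι) (a : ι → A) (F : Dual ℂ (Dual ℂ A)),
    WStarTendsto a l F →
    ∀ b'' : Dual ℂ (Dual ℂ B),
      Tendsto (fun i => b'' (dualSmulR πr (a i) b')) l (𝓝 (dualSmulRStar πr F b' b''))

end ModuleWC

section AlgebraWC

variable (A : Type u) [NonUnitalNormedRing A] [NormedSpace ℂ A]
  [IsScalarTower ℂ A A] [SMulCommClass ℂ A A]

/-- The product `a'' a' ∈ A*` (first step of the first Arens product):
`⟨a'' a', a⟩ = ⟨a'', a' a⟩` where `⟨a' a, b⟩ = ⟨a', a b⟩`. -/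
def biSmul (F : Dual ℂ (Dual ℂ A)) (a' : Dual ℂ A) : Dual ℂ A :=
  F.comp (adj (mulCLM A) a')

/-- The element `a · a' ∈ A*`, `⟨a a', b⟩ = ⟨a', b a⟩`. -/
def leftMulDual (a : A) (a' : Dual ℂ A) : Dual ℂ A := a'.comp ((mulCLM A).flip a)

/-- `A*` has the `Rw*wc`-property with respect to `A`: for every `a' ∈ A*` and every net
`(a_α) ⊆ A` with `a_α → a''` weak* in `A**`, the net `a_α a'` (`⟨a_α a', b⟩ = ⟨a', b a_α⟩`)
converges weakly in `A*` to `a'' a'`. -/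
def RWStarWCDualProp : Prop :=
  ∀ (a' : Dual ℂ A) (ι : Type u) (l : Filter ι) (a : ι → A) (F : Dual ℂ (Dual ℂ A)),
    WStarTendsto a l F →
    ∀ x'' : Dual ℂ (Dual ℂ A),
      Tendsto (fun i => x'' (leftMulDual A (a i) a')) l (𝓝 (x'' (biSmul A F a')))

/-- `A*` has the `Lw*wc`-property with respect to `A`. -/
def LWStarWCDualProp : Prop := ∀ a' : Dual ℂ A, LWStarWC (mulCLM A) a'

/-- `A**` has the `Lw*wc`-property with respect to `A`: for every `x'' ∈ A**` and every net
`(a_α) ⊆ A` with `a_α → a''` weak* in `A**`, the net `x'' a_α` converges weakly in `A**`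
to `x'' a''`. -/
def LWStarWCBidualProp : Prop :=
  ∀ (x'' : Dual ℂ (Dual ℂ A)) (ι : Type u) (l : Filter ι) (a : ι → A) (F : Dual ℂ (Dual ℂ A)),
    WStarTendsto a l F →
    ∀ Φ : Dual ℂ (Dual ℂ (Dual ℂ A)),
      Tendsto (fun i => Φ (fstArens A x'' (inclusionInDoubleDual ℂ A (a i)))) l
        (𝓝 (Φ (fstArens A x'' F)))

/-- `D : A → A*` is a derivation: `D(ab) = a·D(b) + D(a)·b`, where
`(a·f)(x) = f(x a)` and `(f·b)(x) = f(b x)`. -/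
def IsDerivation (D : A →L[ℂ] Dual ℂ A) : Prop :=
  ∀ a b : A, D (a * b) = (D b).comp ((mulCLM A).flip a) + (D a).comp (mulCLM A b)

/-- `A` is weakly amenable: every bounded derivation `D : A → A*` is inner. -/
def WeaklyAmenable : Prop :=
  ∀ D : A →L[ℂ] Dual ℂ A, IsDerivation A D →
    ∃ f : Dual ℂ A, ∀ a : A, D a = f.comp ((mulCLM A).flip a) - f.comp (mulCLM A a)

/-- The left action of `A**` (with the first Arens product) on `A***`:
`(F·Φ)(G) = Φ(G F)`. -/
def ddLeftAct (F : Dual ℂ (Dual ℂ A)) (Φ : Dual ℂ (Dual ℂ (Dual ℂ A))) :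
    Dual ℂ (Dual ℂ (Dual ℂ A)) :=
  Φ.comp ((ext3 (mulCLM A)).flip F)

/-- The right action of `A**` (with the first Arens product) on `A***`:
`(Φ·F)(G) = Φ(F G)`. -/
def ddRightAct (F : Dual ℂ (Dual ℂ A)) (Φ : Dual ℂ (Dual ℂ (Dual ℂ A))) :
    Dual ℂ (Dual ℂ (Dual ℂ A)) :=
  Φ.comp (ext3 (mulCLM A) F)

/-- A bounded map `D : A** → A***` is a derivation for the first Arens product. -/
def IsDerivationDD (D : Dual ℂ (Dual ℂ A) →L[ℂ] Dual ℂ (Dual ℂ (Dual ℂ A))) : Prop :=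
  ∀ F G : Dual ℂ (Dual ℂ A),
    D (fstArens A F G) = ddLeftAct A F (D G) + ddRightAct A G (D F)

/-- `A**` (with the first Arens product) is weakly amenable. -/
def WeaklyAmenableDD : Prop :=
  ∀ D : Dual ℂ (Dual ℂ A) →L[ℂ] Dual ℂ (Dual ℂ (Dual ℂ A)), IsDerivationDD A D →
    ∃ Φ : Dual ℂ (Dual ℂ (Dual ℂ A)), ∀ F, D F = ddLeftAct A F Φ - ddRightAct A F Φ

/-- `A*** A** ⊆ A*`: each product `x''' x''` (`⟨x''' x'', a''⟩ = ⟨x''', x'' a''⟩`)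
lies in the canonical image of `A*` in `A***`. -/
def TripleDualMulIntoDual : Prop :=
  ∀ (Φ : Dual ℂ (Dual ℂ (Dual ℂ A))) (F : Dual ℂ (Dual ℂ A)),
    ∃ a' : Dual ℂ A, ddRightAct A F Φ = inclusionInDoubleDual ℂ (Dual ℂ A) a'

end AlgebraWC

section DualMap

variable {X Y : Type*} [NormedAddCommGroup X] [NormedSpace ℂ X]
  [NormedAddCommGroup Y] [NormedSpace ℂ Y]

/-- The Banach-space adjoint of a bounded operator. -/
def dualMap' (T : X →L[ℂ] Y) : Dual ℂ Y →L[ℂ] Dual ℂ X :=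
  (ContinuousLinearMap.compL ℂ X Y ℂ).flip T

/-- The second adjoint `D'' : A** → A***` of `D : A → A*`. -/
def secondAdjoint {A : Type*} [NonUnitalNormedRing A] [NormedSpace ℂ A]
    (D : A →L[ℂ] Dual ℂ A) :
    Dual ℂ (Dual ℂ A) →L[ℂ] Dual ℂ (Dual ℂ (Dual ℂ A)) :=
  dualMap' (dualMap' D)

end DualMap

section Biregular

variable (A B : Type*) [NonUnitalNormedRing A] [NormedSpace ℂ A]
  [NonUnitalNormedRing B] [NormedSpace ℂ B]

/-- A bounded bilinear form `m : A × B → ℂ` is biregular (Ülger): for any sequences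
`(a_i), (aa2_j)` in the unit ball of `A` and `(b_i), (bb_j)` in the unit ball of `B`,
the two iterated limits of `m(a_i aa2_j, b_i bb_j)` coincide whenever both exist. -/
def Biregular (m : A →L[ℂ] B →L[ℂ] ℂ) : Prop :=
  ∀ (a aa2 : ℕ → A) (b bb : ℕ → B),
    (∀ i, ‖a i‖ ≤ 1) → (∀ j, ‖aa2 j‖ ≤ 1) → (∀ i, ‖b i‖ ≤ 1) → (∀ j, ‖bb j‖ ≤ 1) →
    ∀ (g h : ℕ → ℂ) (L L' : ℂ),
      (∀ i, Tendsto (fun j => m (a i * aa2 j) (b i * bb j)) atTop (𝓝 (g i))) →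
      Tendsto g atTop (𝓝 L) →
      (∀ j, Tendsto (fun i => m (a i * aa2 j) (b i * bb j)) atTop (𝓝 (h j))) →
      Tendsto h atTop (𝓝 L') → L = L'

/-- Arens regularity of the projective tensor product `A ⊗̂ B`.  By Ülger's theorem
(`[22, Theorem 3.4]`), `A ⊗̂ B` is Arens regular if and only if every bounded bilinear
form `m : A × B → ℂ` is biregular; since the dual of `A ⊗̂ B` is exactly the space of
bounded bilinear forms on `A × B`, we take this equivalent characterization as the
formalization of Arens regularity of `A ⊗̂ B`. -/
def ProjArensRegular : Prop := ∀ m : A →L[ℂ] B →L[ℂ] ℂ, Biregular A B m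

end Biregular

end Arens
namespace ArensAux

@[ext] lemma dual_ext {X : Type*} [NormedAddCommGroup X] [NormedSpace ℂ X]
    {f g : NormedSpace.Dual ℂ X} (h : ∀ x, f x = g x) : f = g :=
  ContinuousLinearMap.ext h

end ArensAux
namespace ArensAux

open Arens Filter Topology NormedSpace

universe u

/-- Helly-type lemma: the canonical image of `X` in `X**` interpolates any `F ∈ X**`
exactly on finitely many functionals. -/
lemma helly {X : Type u} [NormedAddCommGroup X] [NormedSpace ℂ X]
    (F : Dual ℂ (Dual ℂ X)) (S : Finset (Dual ℂ X)) :
    ∃ a : X, ∀ x' ∈ S, x' a = F x' := by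
  classical
  by_contra hc
  push_neg at hc
  set T : X →ₗ[ℂ] (↥S → ℂ) :=
    LinearMap.pi (fun s => ((s : Dual ℂ X) : X →ₗ[ℂ] ℂ)) with hTdef
  set V : Submodule ℂ (↥S → ℂ) := LinearMap.range T with hVdef
  set t : ↥S → ℂ := fun s => F (s : Dual ℂ X) with htdef
  have hmem : t ∉ V := by
    rintro ⟨a, ha⟩
    obtain ⟨x', hx', hne⟩ := hc a
    exact hne (congrFun ha ⟨x', hx'⟩)
  have hQ : V.mkQ t ≠ 0 := by
    simpa [Submodule.Quotient.mk_eq_zero] using hmem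
  have : ¬ ∀ φ : Module.Dual ℂ ((↥S → ℂ) ⧸ V), φ (V.mkQ t) = 0 := by
    rw [Module.forall_dual_apply_eq_zero_iff]
    exact hQ
  obtain ⟨g, hg⟩ := not_forall.mp this
  set h : (↥S → ℂ) →ₗ[ℂ] ℂ := g ∘ₗ V.mkQ with hhdef
  have hVzero : ∀ a : X, h (T a) = 0 := by
    intro a
    have : V.mkQ (T a) = 0 := (Submodule.Quotient.mk_eq_zero _).mpr ⟨a, rfl⟩
    simp [hhdef, this]
  have hht : h t ≠ 0 := hg
  set e : ↥S → (↥S → ℂ) := fun i j => if i = j then 1 else 0 with hedef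
  have hrep : ∀ w : ↥S → ℂ, h w = ∑ s, w s * h (e s) := by
    intro w
    conv_lhs => rw [pi_eq_sum_univ w]
    rw [map_sum]
    simp [smul_eq_mul]
    rfl
  set x' : Dual ℂ X := ∑ s : ↥S, h (e s) • (s : Dual ℂ X) with hx'def
  have hx'app : ∀ a : X, x' a = h (T a) := by
    intro a
    rw [hrep (T a)]
    have hsum : x' a = ∑ s : ↥S, h (e s) * (s : Dual ℂ X) a :=
      (map_sum (ContinuousLinearMap.apply ℂ ℂ a)
        (fun s : ↥S => h (e s) • ((s : Dual ℂ X) : X →L[ℂ] ℂ)) Finset.univ).trans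
        (Finset.sum_congr rfl fun s _ => rfl)
    rw [hsum]
    refine Finset.sum_congr rfl fun s _ => ?_
    rw [mul_comm]
    rfl
  have hx'zero : x' = 0 := by
    ext a
    simp [hx'app a, hVzero a]
    rfl
  have hFt : F x' = h t := by
    rw [hrep t]
    simp only [hx'def, map_sum, map_smul, smul_eq_mul]
    refine Finset.sum_congr rfl fun s _ => ?_
    rw [mul_comm]
  rw [hx'zero, map_zero] at hFt
  exact hht hFt.symm

/-- Weak-star density of `X` in `X**`, in net form. -/
lemma exists_wstar_net {X : Type u} [NormedAddCommGroup X] [NormedSpace ℂ X]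
    (F : Dual ℂ (Dual ℂ X)) :
    ∃ a : Finset (Dual ℂ X) → X, WStarTendsto a atTop F := by
  choose a ha using fun S => helly F S
  refine ⟨a, fun x' => ?_⟩
  have hev : ∀ᶠ S in (atTop : Filter (Finset (Dual ℂ X))), x' (a S) = F x' := by
    filter_upwards [eventually_ge_atTop ({x'} : Finset (Dual ℂ X))] with S hS
    exact ha S x' (hS (Finset.mem_singleton_self x'))
  exact Tendsto.congr' (hev.mono fun S h => h.symm) tendsto_const_nhds

end ArensAux
namespace ArensAux

open Arens Filter Topology NormedSpace ContinuousLinearMap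

section Main

variable {A : Type u} [NonUnitalNormedRing A] [NormedSpace ℂ A]
  [IsScalarTower ℂ A A] [SMulCommClass ℂ A A]

local notation "J" => inclusionInDoubleDual ℂ A

lemma fstArens_J_J (a b : A) :
    Arens.fstArens A (J a) (J b) = J (a * b) := by
  ext a'; rfl

/-- The derivation identity for the second adjoint on the image of `A`. -/
lemma der_J_J (D : A →L[ℂ] Dual ℂ A) (hD : Arens.IsDerivation A D) (a b : A) :
    Arens.secondAdjoint D (J (a * b))
      = Arens.ddLeftAct A (J a) (Arens.secondAdjoint D (J b))
        + Arens.ddRightAct A (J b) (Arens.secondAdjoint D (J a)) := by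
  ext G
  have h2 : Arens.adj (Arens.adj (Arens.mulCLM A)) (J a) (D b)
      = (D b).comp ((Arens.mulCLM A).flip a) := by ext x; rfl
  have h3 : Arens.adj (Arens.mulCLM A) (D a) b = (D a).comp (Arens.mulCLM A b) := by
    ext x; rfl
  show G (D (a * b)) = Arens.ddLeftAct A (J a) (Arens.secondAdjoint D (J b)) G
        + Arens.ddRightAct A (J b) (Arens.secondAdjoint D (J a)) G
  have e2 : Arens.ddLeftAct A (J a) (Arens.secondAdjoint D (J b)) G
      = G ((D b).comp ((Arens.mulCLM A).flip a)) := by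
    show G (Arens.adj (Arens.adj (Arens.mulCLM A)) (J a) (D b)) = _
    rw [h2]
  have e3 : Arens.ddRightAct A (J b) (Arens.secondAdjoint D (J a)) G
      = G ((D a).comp (Arens.mulCLM A b)) := by
    show G (Arens.adj (Arens.mulCLM A) (D a) b) = _
    rw [h3]
  rw [e2, e3, hD a b]
  exact map_add G _ _

end Main

end ArensAux
namespace ArensAux

open Arens Filter Topology NormedSpace ContinuousLinearMap

section Main2

variable {A : Type u} [NonUnitalNormedRing A] [NormedSpace ℂ A]
  [IsScalarTower ℂ A A] [SMulCommClass ℂ A A]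

local notation "J" => inclusionInDoubleDual ℂ A

/-- The derivation identity with the second variable extended to `A**`. -/
lemma der_J_G (D : A →L[ℂ] Dual ℂ A) (hD : Arens.IsDerivation A D)
    (a : A) (G : Dual ℂ (Dual ℂ A)) :
    Arens.secondAdjoint D (Arens.fstArens A (J a) G)
      = Arens.ddLeftAct A (J a) (Arens.secondAdjoint D G)
        + Arens.ddRightAct A G (Arens.secondAdjoint D (J a)) := by
  obtain ⟨bN, hbN⟩ := exists_wstar_net G
  haveI : (atTop : Filter (Finset (Dual ℂ A))).NeBot := atTop_neBot
  ext H
  -- ψ1 b = H (D (a * b))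
  set ψ1 : Dual ℂ A := (Arens.dualMap' D H).comp (Arens.mulCLM A a) with hψ1
  -- ψ2 b = H ((D b) ∘ (· * a))
  set ψ2 : Dual ℂ A :=
    H.comp ((Arens.dualMap' ((Arens.mulCLM A).flip a)).comp D) with hψ2
  -- ψ3 b = H ((D a) ∘ (b * ·))
  set ψ3 : Dual ℂ A :=
    H.comp (((ContinuousLinearMap.compL ℂ A A ℂ) (D a)).comp (Arens.mulCLM A)) with hψ3
  have t1 : Tendsto
      (fun S => Arens.secondAdjoint D (Arens.fstArens A (J a) (J (bN S))) H) atTop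
      (𝓝 (Arens.secondAdjoint D (Arens.fstArens A (J a) G) H)) := by
    exact Tendsto.congr (fun S => rfl) (hbN ψ1)
  have t2 : Tendsto
      (fun S => Arens.ddLeftAct A (J a) (Arens.secondAdjoint D (J (bN S))) H) atTop
      (𝓝 (Arens.ddLeftAct A (J a) (Arens.secondAdjoint D G) H)) := by
    exact Tendsto.congr (fun S => rfl) (hbN ψ2)
  have t3 : Tendsto
      (fun S => Arens.ddRightAct A (J (bN S)) (Arens.secondAdjoint D (J a)) H) atTop
      (𝓝 (Arens.ddRightAct A G (Arens.secondAdjoint D (J a)) H)) := by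
    exact Tendsto.congr (fun S => rfl) (hbN ψ3)
  have key : ∀ S, Arens.secondAdjoint D (Arens.fstArens A (J a) (J (bN S))) H
      = Arens.ddLeftAct A (J a) (Arens.secondAdjoint D (J (bN S))) H
        + Arens.ddRightAct A (J (bN S)) (Arens.secondAdjoint D (J a)) H := by
    intro S
    rw [fstArens_J_J, der_J_J D hD a (bN S)]
    rfl
  have t23 : Tendsto
      (fun S => Arens.secondAdjoint D (Arens.fstArens A (J a) (J (bN S))) H) atTop
      (𝓝 (Arens.ddLeftAct A (J a) (Arens.secondAdjoint D G) H
        + Arens.ddRightAct A G (Arens.secondAdjoint D (J a)) H)) := by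
    refine Tendsto.congr (fun S => (key S).symm) (t2.add t3)
  have := tendsto_nhds_unique t1 t23
  rw [this]
  rfl

end Main2

end ArensAux
namespace ArensAux

open Arens Filter Topology NormedSpace ContinuousLinearMap

section Main3

variable {A : Type u} [NonUnitalNormedRing A] [NormedSpace ℂ A]
  [IsScalarTower ℂ A A] [SMulCommClass ℂ A A]

local notation "J" => inclusionInDoubleDual ℂ A

/-- The second adjoint of a derivation is a derivation on `A**` for the first
Arens product, given the `Lw*wc`-property of `A**`. -/
lemma der_F_G (D : A →L[ℂ] Dual ℂ A) (hD : Arens.IsDerivation A D)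
    (hL : Arens.LWStarWCBidualProp A) :
    Arens.IsDerivationDD A (Arens.secondAdjoint D) := by
  intro F G
  obtain ⟨aN, haN⟩ := exists_wstar_net F
  haveI : (atTop : Filter (Finset (Dual ℂ A))).NeBot := atTop_neBot
  ext H
  set χ1 : Dual ℂ A :=
    Arens.adj (Arens.adj (Arens.mulCLM A)) G (Arens.dualMap' D H) with hχ1
  set χ3 : Dual ℂ A := Arens.dualMap' D (Arens.fstArens A G H) with hχ3
  have t1 : Tendsto
      (fun S => Arens.secondAdjoint D (Arens.fstArens A (J (aN S)) G) H) atTop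
      (𝓝 (Arens.secondAdjoint D (Arens.fstArens A F G) H)) :=
    Tendsto.congr (fun S => rfl) (haN χ1)
  have t2 : Tendsto
      (fun S => Arens.ddLeftAct A (J (aN S)) (Arens.secondAdjoint D G) H) atTop
      (𝓝 (Arens.ddLeftAct A F (Arens.secondAdjoint D G) H)) := by
    have h := hL H _ atTop aN F haN (Arens.secondAdjoint D G)
    exact Tendsto.congr (fun S => rfl) h
  have t3 : Tendsto
      (fun S => Arens.ddRightAct A G (Arens.secondAdjoint D (J (aN S))) H) atTop
      (𝓝 (Arens.ddRightAct A G (Arens.secondAdjoint D F) H)) :=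
    Tendsto.congr (fun S => rfl) (haN χ3)
  have key : ∀ S, Arens.secondAdjoint D (Arens.fstArens A (J (aN S)) G) H
      = Arens.ddLeftAct A (J (aN S)) (Arens.secondAdjoint D G) H
        + Arens.ddRightAct A G (Arens.secondAdjoint D (J (aN S))) H := by
    intro S
    rw [der_J_G D hD (aN S) G]
    rfl
  have t23 : Tendsto
      (fun S => Arens.secondAdjoint D (Arens.fstArens A (J (aN S)) G) H) atTop
      (𝓝 (Arens.ddLeftAct A F (Arens.secondAdjoint D G) H
        + Arens.ddRightAct A G (Arens.secondAdjoint D F) H)) :=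
    Tendsto.congr (fun S => (key S).symm) (t2.add t3)
  have := tendsto_nhds_unique t1 t23
  rw [this]
  rfl

end Main3

end ArensAux

/-- **Theorem 3-4.** If `A*` has the `Rw*wc`-property and `A**` has the `Lw*wc`-property
with respect to `A`, and `A**` (with the first Arens product) is weakly amenable, then
`A` is weakly amenable. -/
theorem weaklyAmenable_of_bidual_weaklyAmenable
    {A : Type*} [NonUnitalNormedRing A] [NormedSpace ℂ A]
    [IsScalarTower ℂ A A] [SMulCommClass ℂ A A] [CompleteSpace A]
    (hR : Arens.RWStarWCDualProp A) (hL : Arens.LWStarWCBidualProp A)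
    (hwa : Arens.WeaklyAmenableDD A) : Arens.WeaklyAmenable A := by
  intro D hD
  obtain ⟨Φ, hΦ⟩ := hwa (Arens.secondAdjoint D) (ArensAux.der_F_G D hD hL)
  refine ⟨Φ.comp (NormedSpace.inclusionInDoubleDual ℂ A), fun a => ?_⟩
  ext b
  show Arens.secondAdjoint D (NormedSpace.inclusionInDoubleDual ℂ A a)
      (NormedSpace.inclusionInDoubleDual ℂ A b) = _
  rw [hΦ (NormedSpace.inclusionInDoubleDual ℂ A a)]
  show Φ (Arens.fstArens A (NormedSpace.inclusionInDoubleDual ℂ A b)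
        (NormedSpace.inclusionInDoubleDual ℂ A a))
      - Φ (Arens.fstArens A (NormedSpace.inclusionInDoubleDual ℂ A a)
        (NormedSpace.inclusionInDoubleDual ℂ A b)) = _
  rw [ArensAux.fstArens_J_J, ArensAux.fstArens_J_J]
  rfl
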